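/- arXiv:2511.19894 — 3 statements merged into one kernel-verified Lean document; each statement's English description precedes it below -/
import Mathlib

section
/- Cayley's formula: the complete graph on m vertices has exactly m^(m-2) spanning trees, for m ≥ 1. -/
set_option linter.unusedSectionVars false
set_option linter.unnecessarySimpa false

open Finset SimpleGraph

namespace CayleyAux

variable {V : Type*} [Fintype V] [LinearOrder V]

/-- Degree of a vertex in a finite edge set. -/
def fdeg (E : Finset (Sym2 V)) (v : V) : ℕ := (E.filter (fun e => v ∈ e)).card

/-- `Tre S E` : the edge set `E` forms a tree with vertex set `S`. -/
structure Tre (S : Finset V) (E : Finset (Sym2 V)) : Prop where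
  subset : ∀ e ∈ E, ∀ v ∈ e, v ∈ S
  loopless : ∀ e ∈ E, ¬ e.IsDiag
  conn : ∀ u ∈ S, ∀ v ∈ S, (fromEdgeSet (E : Set (Sym2 V))).Reachable u v
  acyclic : (fromEdgeSet (E : Set (Sym2 V))).IsAcyclic
  count : E.card + 1 = S.card

/-- Prüfer decoding. -/
def decode : Finset V → List V → Finset (Sym2 V)
  | S, [] => if h : S.Nonempty then {s(S.min' h, S.max' h)} else ∅
  | S, x :: a =>
    if h : (S \ (x :: a).toFinset).Nonempty then
      insert s((S \ (x :: a).toFinset).min' h, x)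
        (decode (S.erase ((S \ (x :: a).toFinset).min' h)) a)
    else ∅

lemma fdeg_insert {E : Finset (Sym2 V)} {e : Sym2 V} (he : e ∉ E) (v : V) :
    fdeg (insert e E) v = fdeg E v + (if v ∈ e then 1 else 0) := by
  unfold fdeg
  rw [Finset.filter_insert]
  split_ifs with h
  · rw [Finset.card_insert_of_notMem (fun hc => he (Finset.mem_filter.mp hc).1)]
  · rfl

lemma fdeg_zero {E : Finset (Sym2 V)} {v : V} (h : ∀ e ∈ E, v ∉ e) : fdeg E v = 0 := by
  unfold fdeg
  rw [Finset.card_eq_zero, Finset.filter_eq_empty_iff]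
  exact h

lemma eq_of_fdeg_one {E : Finset (Sym2 V)} {v : V} (h : fdeg E v = 1)
    {e e' : Sym2 V} (he : e ∈ E) (hve : v ∈ e) (he' : e' ∈ E) (hve' : v ∈ e') : e = e' := by
  have h1 : e ∈ E.filter (fun e => v ∈ e) := Finset.mem_filter.mpr ⟨he, hve⟩
  have h2 : e' ∈ E.filter (fun e => v ∈ e) := Finset.mem_filter.mpr ⟨he', hve'⟩
  obtain ⟨x, hx⟩ := Finset.card_eq_one.mp h
  rw [hx, Finset.mem_singleton] at h1 h2
  rw [h1, h2]

lemma sum_fdeg {E : Finset (Sym2 V)} {S : Finset V}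
    (hl : ∀ e ∈ E, ¬ e.IsDiag) (hs : ∀ e ∈ E, ∀ v ∈ e, v ∈ S) :
    ∑ v ∈ S, fdeg E v = 2 * E.card := by
  unfold fdeg
  have : ∀ v ∈ S, (E.filter (fun e => v ∈ e)).card = ∑ e ∈ E, (if v ∈ e then 1 else 0) := by
    intro v _
    rw [Finset.card_filter]
  rw [Finset.sum_congr rfl this, Finset.sum_comm]
  have h2 : ∀ e ∈ E, (∑ v ∈ S, if v ∈ e then (1 : ℕ) else 0) = 2 := by
    intro e he
    induction e with
    | _ x y =>
      have hxy : x ≠ y := by simpa using hl _ he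
      have hx : x ∈ S := hs _ he x (by simp)
      have hy : y ∈ S := hs _ he y (by simp)
      rw [← Finset.card_filter]
      have : S.filter (fun v => v ∈ s(x, y)) = {x, y} := by
        ext v
        simp only [Finset.mem_filter, Sym2.mem_iff, Finset.mem_insert, Finset.mem_singleton]
        constructor
        · exact fun h => h.2
        · rintro (rfl | rfl) <;> simp [hx, hy]
      rw [this, Finset.card_pair hxy]
  rw [Finset.sum_congr rfl h2, Finset.sum_const, smul_eq_mul, mul_comm]

lemma edgeSet_coe {E : Finset (Sym2 V)} (hl : ∀ e ∈ E, ¬ e.IsDiag) :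
    (fromEdgeSet (E : Set (Sym2 V))).edgeSet = (E : Set (Sym2 V)) := by
  rw [edgeSet_fromEdgeSet]
  ext e
  simp only [Set.mem_diff, Finset.mem_coe, Set.mem_setOf_eq, and_iff_left_iff_imp]
  exact fun he => hl e he

lemma tre_fdeg_pos {S : Finset V} {E : Finset (Sym2 V)} (h : Tre S E) (hS : 2 ≤ S.card)
    {v : V} (hv : v ∈ S) : 1 ≤ fdeg E v := by
  obtain ⟨u, hu, hne⟩ := Finset.exists_mem_ne (s := S) (by omega) v
  obtain ⟨w⟩ := h.conn v hv u hu
  obtain ⟨z, hadj, q, rfl⟩ := Walk.exists_eq_cons_of_ne hne.symm w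
  have hmem : s(v, z) ∈ E := by
    rw [fromEdgeSet_adj] at hadj
    exact hadj.1
  rw [Nat.one_le_iff_ne_zero, ← Nat.pos_iff_ne_zero]
  exact Finset.card_pos.mpr ⟨s(v, z), Finset.mem_filter.mpr ⟨hmem, by simp⟩⟩

/-- adding a pendant edge to an acyclic graph keeps it acyclic. -/
lemma acyclic_insert {E : Set (Sym2 V)} (hac : (fromEdgeSet E).IsAcyclic) {u v : V}
    (huv : u ≠ v) (hu : ∀ e ∈ E, u ∉ e) :
    (fromEdgeSet (insert s(u, v) E)).IsAcyclic := by
  intro w c hc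
  have huniq : ∀ x, (fromEdgeSet (insert s(u, v) E)).Adj u x → x = v := by
    intro x hx
    rw [fromEdgeSet_adj, Set.mem_insert_iff] at hx
    rcases hx.1 with h | h
    · exact (Sym2.congr_right.mp h.symm).symm
    · exact absurd (by simp : u ∈ s(u, x)) (hu _ h)
  by_cases hus : u ∈ c.support
  · -- rotate the cycle to start at u, derive contradiction from unique neighbor
    have hc' : (c.rotate u hus).IsCycle := hc.rotate hus
    set c' := c.rotate u hus with hc'def
    clear_value c'
    cases c' with
    | nil => exact hc'.ne_nil rfl
    | cons hadj p =>
      rename_i x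
      have hxv : x = v := huniq x hadj
      have hux : u ≠ x := fun h => huv (h.trans hxv)
      obtain ⟨y, hy, q, hq⟩ := Walk.exists_eq_cons_of_ne hux p.reverse
      have hyx : y = x := (huniq y hy).trans hxv.symm
      have hmem : s(u, x) ∈ p.edges := by
        have : s(u, y) ∈ p.reverse.edges := by rw [hq]; simp
        rw [hyx] at this
        simpa using this
      have := hc'.edges_nodup
      simp only [Walk.edges_cons, List.nodup_cons] at this
      exact this.1 hmem
  · -- transfer the cycle to fromEdgeSet E
    have hsub : ∀ e ∈ c.edges, e ∈ (fromEdgeSet E).edgeSet := by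
      intro e hce
      have h1 : e ∈ (fromEdgeSet (insert s(u, v) E)).edgeSet := c.edges_subset_edgeSet hce
      rw [edgeSet_fromEdgeSet, Set.mem_diff, Set.mem_insert_iff] at h1
      rcases h1.1 with h | h
      · subst h
        exact absurd (c.fst_mem_support_of_mem_edges hce) hus
      · rw [edgeSet_fromEdgeSet]
        exact ⟨h, h1.2⟩
    exact hac (c.transfer _ hsub) (hc.transfer hsub)

lemma Tre.pendant {S : Finset V} {E : Finset (Sym2 V)} (h : Tre S E) {u v : V}
    (hu : u ∉ S) (hv : v ∈ S) : Tre (insert u S) (insert s(u, v) E) := by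
  have huv : u ≠ v := fun h => hu (h ▸ hv)
  have hnotu : ∀ e ∈ E, u ∉ e := fun e he hue => hu (h.subset e he u hue)
  have hne : s(u, v) ∉ E := fun hc => (hnotu _ hc) (by simp)
  have hcoe : ((insert s(u, v) E : Finset (Sym2 V)) : Set (Sym2 V))
      = insert s(u, v) (E : Set (Sym2 V)) := by simp
  have hle : fromEdgeSet (E : Set (Sym2 V)) ≤ fromEdgeSet (insert s(u, v) (E : Set (Sym2 V))) :=
    fromEdgeSet_mono (Set.subset_insert _ _)
  have hadj : (fromEdgeSet (insert s(u, v) (E : Set (Sym2 V)))).Adj u v := by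
    rw [fromEdgeSet_adj]
    exact ⟨Set.mem_insert _ _, huv⟩
  constructor
  · intro e he w hw
    rcases Finset.mem_insert.mp he with rfl | he
    · rcases Sym2.mem_iff.mp hw with rfl | rfl
      · exact Finset.mem_insert_self _ _
      · exact Finset.mem_insert_of_mem hv
    · exact Finset.mem_insert_of_mem (h.subset e he w hw)
  · intro e he
    rcases Finset.mem_insert.mp he with rfl | he
    · simpa using huv
    · exact h.loopless e he
  · intro a ha b hb
    rw [hcoe]
    have key : ∀ a, a ∈ insert u S → (fromEdgeSet (insert s(u, v) (E : Set (Sym2 V)))).Reachable a v := by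
      intro a ha
      rcases Finset.mem_insert.mp ha with rfl | ha
      · exact hadj.reachable
      · exact (h.conn a ha v hv).mono hle
    exact (key a ha).trans (key b hb).symm
  · rw [hcoe]
    exact acyclic_insert h.acyclic huv (fun e he => hnotu e he)
  · rw [Finset.card_insert_of_notMem hne, Finset.card_insert_of_notMem hu, h.count]

lemma path_avoid_leaf {G : SimpleGraph V} {u v l m : V} {p : G.Walk u v} (hp : p.IsPath)
    (hu : u ≠ l) (hv : v ≠ l) (huniq : ∀ x, G.Adj l x → x = m) : l ∉ p.support := by
  intro hmem
  have hlu : l ≠ u := hu.symm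
  have hlv : l ≠ v := fun h => hv h.symm
  -- q : Walk u l, r : Walk l v
  obtain ⟨x, hx, q', hq'⟩ := Walk.exists_eq_cons_of_ne hlu (p.takeUntil l hmem).reverse
  obtain ⟨y, hy, r', hr'⟩ := Walk.exists_eq_cons_of_ne hlv (p.dropUntil l hmem)
  have hxm : x = m := huniq x hx
  have hym : y = m := huniq y hy
  have h1 : m ∈ (p.takeUntil l hmem).support := by
    have : x ∈ (p.takeUntil l hmem).reverse.support := by
      rw [hq']; simp
    rw [Walk.support_reverse, List.mem_reverse] at this
    rwa [hxm] at this
  have h2 : m ∈ (p.dropUntil l hmem).support.tail := by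
    rw [hr']
    simp only [Walk.support_cons, List.tail_cons]
    rw [← hym]
    exact Walk.start_mem_support r'
  have hnd := hp.support_nodup
  rw [← Walk.take_spec p hmem, Walk.support_append, List.nodup_append'] at hnd
  exact hnd.2.2 h1 h2

lemma Tre.removeLeaf {S : Finset V} {E : Finset (Sym2 V)} (h : Tre S E)
    {l m : V} (hl : l ∈ S) (hd : fdeg E l = 1) (he : s(l, m) ∈ E) :
    Tre (S.erase l) (E.erase s(l, m)) := by
  have hlm : l ≠ m := by
    intro hc
    exact h.loopless _ he (by rw [← hc]; simp)
  have hm : m ∈ S := h.subset _ he m (by simp)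
  have huniqe : ∀ e ∈ E, l ∈ e → e = s(l, m) := fun e hee hle =>
    eq_of_fdeg_one hd hee hle he (by simp)
  have hnotl : ∀ e ∈ E.erase s(l, m), l ∉ e := by
    intro e hee hle
    exact (Finset.ne_of_mem_erase hee) (huniqe e (Finset.mem_of_mem_erase hee) hle)
  have hcoe : ((E.erase s(l, m) : Finset (Sym2 V)) : Set (Sym2 V))
      = (E : Set (Sym2 V)) \ {s(l, m)} := by simp [Finset.coe_erase]
  have hle : fromEdgeSet ((E.erase s(l, m) : Finset (Sym2 V)) : Set (Sym2 V))
      ≤ fromEdgeSet (E : Set (Sym2 V)) :=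
    fromEdgeSet_mono (by rw [hcoe]; exact Set.diff_subset)
  have huniqadj : ∀ x, (fromEdgeSet (E : Set (Sym2 V))).Adj l x → x = m := by
    intro x hx
    rw [fromEdgeSet_adj] at hx
    have := huniqe _ hx.1 (by simp)
    exact Sym2.congr_right.mp this
  constructor
  · intro e hee w hw
    refine Finset.mem_erase.mpr ⟨?_, h.subset e (Finset.mem_of_mem_erase hee) w hw⟩
    intro hc
    exact hnotl e hee (hc ▸ hw)
  · exact fun e hee => h.loopless e (Finset.mem_of_mem_erase hee)
  · intro a ha b hb
    have ha' := Finset.mem_of_mem_erase ha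
    have hb' := Finset.mem_of_mem_erase hb
    obtain ⟨w⟩ := h.conn a ha' b hb'
    have hpath := w.bypass_isPath
    have hal : a ≠ l := Finset.ne_of_mem_erase ha
    have hbl : b ≠ l := Finset.ne_of_mem_erase hb
    have hlns : l ∉ w.bypass.support := path_avoid_leaf hpath hal hbl huniqadj
    have hsub : ∀ e ∈ w.bypass.edges,
        e ∈ (fromEdgeSet ((E.erase s(l, m) : Finset (Sym2 V)) : Set (Sym2 V))).edgeSet := by
      intro e hce
      have h1 := w.bypass.edges_subset_edgeSet hce
      rw [edgeSet_fromEdgeSet, Set.mem_diff] at h1 ⊢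
      rw [hcoe]
      refine ⟨⟨h1.1, ?_⟩, h1.2⟩
      intro hc
      rw [Set.mem_singleton_iff] at hc
      subst hc
      exact hlns (w.bypass.fst_mem_support_of_mem_edges hce)
    exact ⟨w.bypass.transfer _ hsub⟩
  · intro w c hc
    exact h.acyclic (c.mapLe hle) (hc.mapLe hle)
  · have h1 : (E.erase s(l, m)).card + 1 = E.card := by
      rw [Finset.card_erase_of_mem he]
      have : 1 ≤ E.card := Finset.card_pos.mpr ⟨_, he⟩
      omega
    have h2 : (S.erase l).card + 1 = S.card := by
      rw [Finset.card_erase_of_mem hl]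
      have : 1 ≤ S.card := Finset.card_pos.mpr ⟨_, hl⟩
      omega
    have := h.count
    omega

lemma decode_spec : ∀ (a : List V) (S : Finset V), S.card = a.length + 2 →
    (∀ x ∈ a, x ∈ S) →
    Tre S (decode S a) ∧ ∀ v ∈ S, (fdeg (decode S a) v = 1 ↔ v ∉ a) := by
  intro a
  induction a with
  | nil =>
    intro S hcard _
    have hS : S.Nonempty := Finset.card_pos.mp (by omega)
    have hlt : 1 < S.card := by simp at hcard; omega
    have hxS : S.min' hS ∈ S := S.min'_mem hS
    have hyS : S.max' hS ∈ S := S.max'_mem hS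
    have hxy : S.min' hS ≠ S.max' hS := ne_of_lt (S.min'_lt_max'_of_card hlt)
    set x := S.min' hS
    set y := S.max' hS
    have hdec : decode S [] = {s(x, y)} := by rw [decode, dif_pos hS]
    have hSxy : S = {x, y} := by
      refine (Finset.eq_of_subset_of_card_le ?_ ?_).symm
      · intro t ht
        rcases Finset.mem_insert.mp ht with rfl | ht
        · exact hxS
        · rw [Finset.mem_singleton] at ht; exact ht ▸ hyS
      · rw [Finset.card_pair hxy]
        simp at hcard; omega
    have hmemS : ∀ v ∈ S, v = x ∨ v = y := by
      intro v hv
      rw [hSxy] at hv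
      simpa using hv
    have hadj : (fromEdgeSet (({s(x, y)} : Finset (Sym2 V)) : Set (Sym2 V))).Adj x y := by
      rw [fromEdgeSet_adj]
      exact ⟨by simp, hxy⟩
    rw [hdec]
    refine ⟨⟨?_, ?_, ?_, ?_, ?_⟩, ?_⟩
    · intro e he w hw
      rw [Finset.mem_singleton] at he
      subst he
      rcases Sym2.mem_iff.mp hw with rfl | rfl
      · exact hxS
      · exact hyS
    · intro e he
      rw [Finset.mem_singleton] at he
      subst he
      simpa using hxy
    · intro a ha b hb
      have key : ∀ a ∈ S, (fromEdgeSet (({s(x, y)} : Finset (Sym2 V)) : Set (Sym2 V))).Reachable a x := by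
        intro a ha
        rcases hmemS a ha with rfl | rfl
        · exact SimpleGraph.Reachable.refl _
        · exact hadj.symm.reachable
      exact (key a ha).trans (key b hb).symm
    · have hco : (({s(x, y)} : Finset (Sym2 V)) : Set (Sym2 V)) = insert s(x, y) (∅ : Set (Sym2 V)) := by
        simp
      rw [hco]
      refine acyclic_insert ?_ hxy (by simp)
      rw [fromEdgeSet_empty]
      exact isAcyclic_bot
    · simp at hcard ⊢; omega
    · intro v hv
      rcases hmemS v hv with rfl | rfl <;>
        simp [fdeg, Finset.filter_singleton]
  | cons x a ih =>
    intro S hcard hent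
    simp only [List.length_cons] at hcard
    have hTne : (S \ (x :: a).toFinset).Nonempty := by
      rw [Finset.sdiff_nonempty]
      intro hsub
      have h1 := Finset.card_le_card hsub
      have h2 := (x :: a).toFinset_card_le
      simp only [List.length_cons] at h2
      omega
    have hlmem : (S \ (x :: a).toFinset).min' hTne ∈ S \ (x :: a).toFinset :=
      Finset.min'_mem _ _
    set l := (S \ (x :: a).toFinset).min' hTne with hldef
    have hlS : l ∈ S := (Finset.mem_sdiff.mp hlmem).1
    have hlnot : l ∉ x :: a := by
      have := (Finset.mem_sdiff.mp hlmem).2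
      intro hc
      exact this (List.mem_toFinset.mpr hc)
    have hlx : l ≠ x := fun h => hlnot (h ▸ List.mem_cons_self (a := x) (l := a))
    have hla : l ∉ a := fun h => hlnot (List.mem_cons_of_mem _ h)
    have hxS : x ∈ S := hent x (List.mem_cons_self (a := x) (l := a))
    have hxS' : x ∈ S.erase l := Finset.mem_erase.mpr ⟨fun h => hlx h.symm, hxS⟩
    have hcard' : (S.erase l).card = a.length + 2 := by
      rw [Finset.card_erase_of_mem hlS]; omega
    have hent' : ∀ z ∈ a, z ∈ S.erase l := fun z hz =>
      Finset.mem_erase.mpr ⟨fun h => hla (h ▸ hz), hent z (List.mem_cons_of_mem _ hz)⟩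
    obtain ⟨htre', hii'⟩ := ih (S.erase l) hcard' hent'
    have hdec : decode S (x :: a) = insert s(l, x) (decode (S.erase l) a) := by
      rw [decode, dif_pos hTne]
    have hlnS' : l ∉ S.erase l := Finset.notMem_erase _ _
    have htre : Tre S (decode S (x :: a)) := by
      rw [hdec]
      have := htre'.pendant hlnS' hxS'
      rwa [Finset.insert_erase hlS] at this
    refine ⟨htre, ?_⟩
    intro v hv
    have hnotedge : s(l, x) ∉ decode (S.erase l) a := by
      intro hc
      exact hlnS' (htre'.subset _ hc l (by simp))
    rw [hdec, fdeg_insert hnotedge]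
    by_cases hvl : v = l
    · subst hvl
      have h0 : fdeg (decode (S.erase l) a) l = 0 :=
        fdeg_zero (fun e hee hve => hlnS' (htre'.subset e hee l hve))
      simp [h0, hlnot]
    · have hvS' : v ∈ S.erase l := Finset.mem_erase.mpr ⟨hvl, hv⟩
      by_cases hvx : v = x
      · subst hvx
        have hpos : 1 ≤ fdeg (decode (S.erase l) a) v := tre_fdeg_pos htre' (by omega) hvS'
        have hone : (if v ∈ s(l, v) then (1 : ℕ) else 0) = 1 := by simp
        rw [hone]
        refine iff_of_false (by omega) (by simp)
      · have hzero : (if v ∈ s(l, x) then (1 : ℕ) else 0) = 0 := by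
          simp [Sym2.mem_iff, hvl, hvx]
        rw [hzero, add_zero, hii' v hvS']
        simp [List.mem_cons, hvx]

lemma decode_inj : ∀ (a b : List V) (S : Finset V), S.card = a.length + 2 →
    a.length = b.length → (∀ x ∈ a, x ∈ S) → (∀ x ∈ b, x ∈ S) →
    decode S a = decode S b → a = b := by
  intro a
  induction a with
  | nil =>
    intro b S _ hlen _ _ _
    exact (List.length_eq_zero_iff.mp hlen.symm).symm
  | cons x a ih =>
    intro b S hcard hlen hea heb hdeq
    cases b with
    | nil => simp at hlen
    | cons y b =>
      simp only [List.length_cons] at hcard hlen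
      obtain ⟨htra, hiia⟩ := decode_spec (x :: a) S (by simp; omega) hea
      obtain ⟨htrb, hiib⟩ := decode_spec (y :: b) S (by simp; omega) heb
      have key : ∀ v ∈ S, (v ∉ x :: a ↔ v ∉ y :: b) := by
        intro v hv
        rw [← hiia v hv, hdeq, hiib v hv]
      have hseteq : S \ (x :: a).toFinset = S \ (y :: b).toFinset := by
        ext v
        simp only [Finset.mem_sdiff, List.mem_toFinset]
        constructor
        · rintro ⟨hvS, hvn⟩
          exact ⟨hvS, (key v hvS).mp hvn⟩
        · rintro ⟨hvS, hvn⟩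
          exact ⟨hvS, (key v hvS).mpr hvn⟩
      have hTa : (S \ (x :: a).toFinset).Nonempty := by
        rw [Finset.sdiff_nonempty]
        intro hsub
        have h1 := Finset.card_le_card hsub
        have h2 := (x :: a).toFinset_card_le
        simp only [List.length_cons] at h2
        omega
      have hTb : (S \ (y :: b).toFinset).Nonempty := hseteq ▸ hTa
      have hmin : (S \ (x :: a).toFinset).min' hTa = (S \ (y :: b).toFinset).min' hTb := by
        congr 1
      set l := (S \ (x :: a).toFinset).min' hTa with hldef
      have hlmem : l ∈ S \ (x :: a).toFinset := Finset.min'_mem _ _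
      have hlS : l ∈ S := (Finset.mem_sdiff.mp hlmem).1
      have hlnota : l ∉ x :: a := by
        have := (Finset.mem_sdiff.mp hlmem).2
        intro hc; exact this (List.mem_toFinset.mpr hc)
      have hlnotb : l ∉ y :: b := (key l hlS).mp hlnota
      have hdeca : decode S (x :: a) = insert s(l, x) (decode (S.erase l) a) := by
        rw [decode, dif_pos hTa]
      have hdecb : decode S (y :: b) = insert s(l, y) (decode (S.erase l) b) := by
        rw [decode, dif_pos hTb, ← hmin]
      have hfdeg : fdeg (decode S (x :: a)) l = 1 := (hiia l hlS).mpr hlnota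
      have hmem1 : s(l, x) ∈ decode S (x :: a) := by
        rw [hdeca]; exact Finset.mem_insert_self _ _
      have hmem2 : s(l, y) ∈ decode S (x :: a) := by
        rw [hdeq, hdecb]; exact Finset.mem_insert_self _ _
      have hedge : s(l, x) = s(l, y) :=
        eq_of_fdeg_one hfdeg hmem1 (by simp) hmem2 (by simp)
      have hxy : x = y := Sym2.congr_right.mp hedge
      subst hxy
      -- now the tails are equal
      have hla : l ∉ a := fun h => hlnota (List.mem_cons_of_mem _ h)
      have hcard' : (S.erase l).card = a.length + 2 := by
        rw [Finset.card_erase_of_mem hlS]; omega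
      have hea' : ∀ z ∈ a, z ∈ S.erase l := fun z hz =>
        Finset.mem_erase.mpr ⟨fun h => hla (h ▸ hz), hea z (List.mem_cons_of_mem _ hz)⟩
      have hlb : l ∉ b := fun h => hlnotb (List.mem_cons_of_mem _ h)
      have heb' : ∀ z ∈ b, z ∈ S.erase l := fun z hz =>
        Finset.mem_erase.mpr ⟨fun h => hlb (h ▸ hz), heb z (List.mem_cons_of_mem _ hz)⟩
      obtain ⟨htra', _⟩ := decode_spec a (S.erase l) hcard' hea'
      obtain ⟨htrb', _⟩ := decode_spec b (S.erase l) (by omega) heb'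
      have hlnS' : l ∉ S.erase l := Finset.notMem_erase _ _
      have hna : s(l, x) ∉ decode (S.erase l) a := fun hc =>
        hlnS' (htra'.subset _ hc l (by simp))
      have hnb : s(l, x) ∉ decode (S.erase l) b := fun hc =>
        hlnS' (htrb'.subset _ hc l (by simp))
      have htails : decode (S.erase l) a = decode (S.erase l) b := by
        have h1 : (decode S (x :: a)).erase s(l, x) = decode (S.erase l) a := by
          rw [hdeca, Finset.erase_insert hna]
        have h2 : (decode S (x :: a)).erase s(l, x) = decode (S.erase l) b := by
          rw [hdeq, hdecb, Finset.erase_insert hnb]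
        rw [← h1, h2]
      have := ih b (S.erase l) hcard' (by omega) hea' heb' htails
      rw [this]

lemma decode_surj : ∀ (n : ℕ) (S : Finset V) (E : Finset (Sym2 V)), S.card = n + 2 →
    Tre S E → ∃ a : List V, a.length = n ∧ (∀ x ∈ a, x ∈ S) ∧ decode S a = E := by
  intro n
  induction n with
  | zero =>
    intro S E hcard htre
    have hE1 : E.card = 1 := by have := htre.count; omega
    obtain ⟨e, he⟩ := Finset.card_eq_one.mp hE1
    obtain ⟨p, q, rfl⟩ : ∃ p q, e = s(p, q) := by
      induction e using Sym2.ind with | _ x y => exact ⟨x, y, rfl⟩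
    have hmm : s(p, q) ∈ E := he ▸ Finset.mem_singleton_self _
    have hpq : p ≠ q := by simpa using htre.loopless _ hmm
    have hpS : p ∈ S := htre.subset _ hmm p (by simp)
    have hqS : q ∈ S := htre.subset _ hmm q (by simp)
    have hS : S.Nonempty := ⟨p, hpS⟩
    refine ⟨[], rfl, by simp, ?_⟩
    have hSpq : S = {p, q} := by
      refine (Finset.eq_of_subset_of_card_le ?_ ?_).symm
      · intro t ht
        rcases Finset.mem_insert.mp ht with rfl | ht
        · exact hpS
        · rw [Finset.mem_singleton] at ht; exact ht ▸ hqS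
      · rw [Finset.card_pair hpq]; omega
    have hcases : ∀ w ∈ S, w = p ∨ w = q := by
      intro w hw; rw [hSpq] at hw; simpa using hw
    have hxy : S.min' hS ≠ S.max' hS := ne_of_lt (S.min'_lt_max'_of_card (by omega))
    rcases hcases _ (S.min'_mem hS) with h1 | h1 <;>
      rcases hcases _ (S.max'_mem hS) with h2 | h2
    · exact absurd (h1.trans h2.symm) hxy
    · rw [decode, dif_pos hS, he, h1, h2]
    · rw [decode, dif_pos hS, he, h1, h2, Sym2.eq_swap]
    · exact absurd (h1.trans h2.symm) hxy
  | succ n ihn =>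
    intro S E hcard htre
    have hS2 : 2 ≤ S.card := by omega
    have hLne : (S.filter (fun v => fdeg E v = 1)).Nonempty := by
      by_contra hLe
      rw [Finset.not_nonempty_iff_eq_empty] at hLe
      have h2le : ∀ v ∈ S, 2 ≤ fdeg E v := by
        intro v hv
        have h1 := tre_fdeg_pos htre hS2 hv
        have hne1 : fdeg E v ≠ 1 := by
          intro hc
          have : v ∈ S.filter (fun v => fdeg E v = 1) := Finset.mem_filter.mpr ⟨hv, hc⟩
          simp [hLe] at this
        omega
      have hsum := sum_fdeg htre.loopless htre.subset
      have hge : ∑ v ∈ S, fdeg E v ≥ ∑ _v ∈ S, 2 := Finset.sum_le_sum h2le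
      rw [Finset.sum_const, smul_eq_mul] at hge
      have hcount := htre.count
      omega
    set L := S.filter (fun v => fdeg E v = 1) with hLdef
    set l := L.min' hLne with hldef
    have hlL : l ∈ L := L.min'_mem hLne
    have hlS : l ∈ S := (Finset.mem_filter.mp hlL).1
    have hld : fdeg E l = 1 := (Finset.mem_filter.mp hlL).2
    obtain ⟨e, he⟩ := Finset.card_eq_one.mp hld
    have hmemfil : e ∈ E.filter (fun e' => l ∈ e') := by
      rw [he]; exact Finset.mem_singleton_self e
    have heE : e ∈ E := (Finset.mem_filter.mp hmemfil).1
    have hle : l ∈ e := (Finset.mem_filter.mp hmemfil).2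
    set m := Sym2.Mem.other' hle with hmdef
    have hspec : s(l, m) = e := Sym2.other_spec' hle
    have heE' : s(l, m) ∈ E := hspec ▸ heE
    have hml : m ≠ l := by
      intro hc
      apply htre.loopless e heE
      rw [← hspec, hc]; simp
    have hmS : m ∈ S := htre.subset _ heE' m (by simp)
    have htre' := htre.removeLeaf hlS hld heE'
    have hcard' : (S.erase l).card = n + 2 := by rw [Finset.card_erase_of_mem hlS]; omega
    obtain ⟨a', hlen', hent', hdec'⟩ := ihn (S.erase l) (E.erase s(l, m)) hcard' htre'
    have hEeq : insert s(l, m) (E.erase s(l, m)) = E := Finset.insert_erase heE'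
    have hnotin : s(l, m) ∉ E.erase s(l, m) := Finset.notMem_erase _ _
    obtain ⟨_, hii'⟩ := decode_spec a' (S.erase l) (by omega) hent'
    rw [hdec'] at hii'
    have hla' : l ∉ a' := fun h => (Finset.notMem_erase l S) (hent' l h)
    have hset : S \ (m :: a').toFinset = L := by
      ext v
      simp only [Finset.mem_sdiff, List.mem_toFinset, hLdef, Finset.mem_filter, List.mem_cons]
      constructor
      · rintro ⟨hvS, hvn⟩
        push_neg at hvn
        obtain ⟨hvm, hva⟩ := hvn
        refine ⟨hvS, ?_⟩
        by_cases hvl : v = l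
        · exact hvl ▸ hld
        · have hvS' : v ∈ S.erase l := Finset.mem_erase.mpr ⟨hvl, hvS⟩
          have h1 : fdeg (E.erase s(l, m)) v = 1 := (hii' v hvS').mpr hva
          rw [← hEeq, fdeg_insert hnotin]
          have hz : (if v ∈ s(l, m) then (1 : ℕ) else 0) = 0 := by
            simp [Sym2.mem_iff, hvl, hvm]
          rw [hz, add_zero]
          exact h1
      · rintro ⟨hvS, hvd⟩
        refine ⟨hvS, ?_⟩
        intro hor
        by_cases hvm : v = m
        · subst hvm
          have hmS' : m ∈ S.erase l := Finset.mem_erase.mpr ⟨hml, hvS⟩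
          have hpos : 1 ≤ fdeg (E.erase s(l, m)) m := tre_fdeg_pos htre' (by omega) hmS'
          rw [← hEeq, fdeg_insert hnotin] at hvd
          have hone : (if m ∈ s(l, m) then (1 : ℕ) else 0) = 1 := by simp
          rw [hone] at hvd
          omega
        · have hva : v ∈ a' := by
            rcases hor with h | h
            · exact absurd h hvm
            · exact h
          have hvl : v ≠ l := fun h => (Finset.notMem_erase l S) (h ▸ hent' v hva)
          have hvS' : v ∈ S.erase l := hent' v hva
          rw [← hEeq, fdeg_insert hnotin] at hvd
          have hz : (if v ∈ s(l, m) then (1 : ℕ) else 0) = 0 := by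
            simp [Sym2.mem_iff, hvl, hvm]
          rw [hz, add_zero] at hvd
          exact ((hii' v hvS').mp hvd) hva
    have hTne : (S \ (m :: a').toFinset).Nonempty := by rw [hset]; exact hLne
    have hl0 : (S \ (m :: a').toFinset).min' hTne = l := by
      rw [hldef]
      congr 1
    refine ⟨m :: a', by simp [hlen'], ?_, ?_⟩
    · intro z hz
      rcases List.mem_cons.mp hz with rfl | hz
      · exact hmS
      · exact (Finset.mem_erase.mp (hent' z hz)).2
    · rw [decode, dif_pos hTne, hl0, hdec', hEeq]

lemma card_tre (k : ℕ) (hV : Fintype.card V = k + 2) :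
    Nat.card {E : Finset (Sym2 V) // Tre Finset.univ E} = Fintype.card V ^ k := by
  have hcu : (Finset.univ : Finset V).card = k + 2 := by rw [Finset.card_univ, hV]
  have hbij : Function.Bijective
      (fun a : {a : List V // a.length = k ∧ ∀ x ∈ a, x ∈ (Finset.univ : Finset V)} =>
        (⟨decode Finset.univ a.1, (decode_spec a.1 Finset.univ (by rw [hcu, a.2.1]) a.2.2).1⟩ :
          {E : Finset (Sym2 V) // Tre Finset.univ E})) := by
    constructor
    · intro a b hab
      apply Subtype.ext
      exact decode_inj a.1 b.1 Finset.univ (by rw [hcu, a.2.1]) (a.2.1.trans b.2.1.symm)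
        a.2.2 b.2.2 (congrArg Subtype.val hab)
    · intro E
      obtain ⟨a, hlen, hent, hdec⟩ := decode_surj k Finset.univ E.1 hcu E.2
      exact ⟨⟨a, hlen, hent⟩, Subtype.ext hdec⟩
  rw [← Nat.card_congr (Equiv.ofBijective _ hbij)]
  have e1 : {a : List V // a.length = k ∧ ∀ x ∈ a, x ∈ (Finset.univ : Finset V)} ≃
      {a : List V // a.length = k} := Equiv.subtypeEquivRight (by simp)
  rw [Nat.card_congr e1]
  have e2 : {a : List V // a.length = k} ≃ (Fin k → V) := by
    refine ⟨fun a i => a.1.get (Fin.cast a.2.symm i), fun f => ⟨List.ofFn f, List.length_ofFn (f := f)⟩,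
      ?_, ?_⟩
    · intro a
      apply Subtype.ext
      apply List.ext_get (by simp [a.2])
      intro n h1 h2
      simp [List.get_ofFn]
    · intro f
      funext i
      simp [List.get_ofFn]
  rw [Nat.card_congr e2, Nat.card_eq_fintype_card, Fintype.card_fun, Fintype.card_fin]

open scoped Classical in
lemma boundary (hm : 1 ≤ Fintype.card V) :
    Nat.card {T : SimpleGraph V // T ≤ ⊤ ∧ T.IsTree}
      = Nat.card {E : Finset (Sym2 V) // Tre Finset.univ E} := by
  classical
  have hnV : Nonempty V := Fintype.card_pos_iff.mp (by omega)
  have tre_of : ∀ T : SimpleGraph V, T.IsTree → Tre Finset.univ T.edgeFinset := by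
    intro T hT
    constructor
    · intro e _ w _; exact Finset.mem_univ _
    · intro e he; exact T.not_isDiag_of_mem_edgeSet (mem_edgeFinset.mp he)
    · intro u _ v _
      rw [coe_edgeFinset, fromEdgeSet_edgeSet]
      exact hT.isConnected.preconnected u v
    · rw [coe_edgeFinset, fromEdgeSet_edgeSet]
      exact hT.IsAcyclic
    · rw [Finset.card_univ]; exact hT.card_edgeFinset
  have tree_of : ∀ E : Finset (Sym2 V), Tre Finset.univ E →
      (fromEdgeSet (E : Set (Sym2 V))).IsTree := by
    intro E hE
    constructor
    · exact SimpleGraph.Connected.mk (fun u v => hE.conn u (Finset.mem_univ u) v (Finset.mem_univ v))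
    · exact hE.acyclic
  refine Nat.card_congr ⟨fun T => ⟨T.1.edgeFinset, tre_of T.1 T.2.2⟩,
    fun E => ⟨fromEdgeSet (E.1 : Set (Sym2 V)), le_top, tree_of E.1 E.2⟩, ?_, ?_⟩
  · intro T
    apply Subtype.ext
    dsimp only
    rw [coe_edgeFinset, fromEdgeSet_edgeSet]
  · intro E
    apply Subtype.ext
    apply Finset.coe_injective
    dsimp only
    rw [coe_edgeFinset, edgeSet_coe E.2.loopless]

end CayleyAux

/-- Cayley's formula: the complete graph on `m ≥ 1` vertices has exactly
`m ^ (m - 2)` spanning trees.  A spanning tree of the complete graph on the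
vertex type `V` is a simple graph on `V` (hence containing all vertices) that
is a tree (it is automatically a subgraph of `⊤`). -/
theorem cayley_formula {V : Type*} [Fintype V] (hm : 1 ≤ Fintype.card V) :
    Nat.card {T : SimpleGraph V // T ≤ ⊤ ∧ T.IsTree}
      = Fintype.card V ^ (Fintype.card V - 2) := by
  letI : LinearOrder V := LinearOrder.lift' (Fintype.equivFin V) (Equiv.injective _)
  rw [CayleyAux.boundary hm]
  rcases Nat.lt_or_ge (Fintype.card V) 2 with h2 | h2
  · -- card = 1
    have h1 : Fintype.card V = 1 := le_antisymm (by omega) hm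
    have htre : CayleyAux.Tre (Finset.univ : Finset V) ∅ := by
      constructor
      · simp
      · simp
      · intro u _ v _
        have : u = v := by
          have := Fintype.card_le_one_iff.mp (by omega : Fintype.card V ≤ 1)
          exact this u v
        exact this ▸ SimpleGraph.Reachable.refl u
      · simpa using SimpleGraph.isAcyclic_bot
      · simp [Finset.card_univ, h1]
    have huniq : ∀ E : Finset (Sym2 V), CayleyAux.Tre Finset.univ E → E = ∅ := by
      intro E hE
      have := hE.count
      rw [Finset.card_univ, h1] at this
      exact Finset.card_eq_zero.mp (by omega)
    haveI : Unique {E : Finset (Sym2 V) // CayleyAux.Tre Finset.univ E} :=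
      ⟨⟨⟨∅, htre⟩⟩, fun E => Subtype.ext (huniq E.1 E.2)⟩
    rw [Nat.card_unique, h1]
    norm_num
  · obtain ⟨k, hk⟩ : ∃ k, Fintype.card V = k + 2 := ⟨Fintype.card V - 2, by omega⟩
    rw [CayleyAux.card_tre k hk, hk]
    have : k + 2 - 2 = k := by omega
    rw [this]
end

section
/- Let K be a finite connected weighted graph with positive injective edge weights, let T be its maximum spanning tree, and let U be the union over all vertices s of the shortest-path trees rooted at s computed with distances d(i,j) = 1/w(i,j). Then T ⊆ U ⊆ K (as edge sets). -/
open SimpleGraph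

/-- Total length of a walk with respect to edge distances `d`. -/
def walkCost {V : Type*} {K : SimpleGraph V} (d : Sym2 V → ℝ) {s t : V}
    (p : K.Walk s t) : ℝ :=
  (p.edges.map d).sum

/-- `p` is a shortest path from `s` to `t` with respect to edge distances `d`:
it is a path minimizing the total distance among all paths from `s` to `t`. -/
def IsShortestPath {V : Type*} {K : SimpleGraph V} (d : Sym2 V → ℝ) {s t : V}
    (p : K.Walk s t) : Prop :=
  p.IsPath ∧ ∀ q : K.Walk s t, q.IsPath → walkCost d p ≤ walkCost d q

/-- The union, over all roots `s`, of the shortest-path trees rooted at `s`,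
as an edge set: the set of edges lying on some shortest path. -/
def shortestPathUnion {V : Type*} (K : SimpleGraph V) (d : Sym2 V → ℝ) :
    Set (Sym2 V) :=
  {x | ∃ (s t : V) (p : K.Walk s t), IsShortestPath d p ∧ x ∈ p.edges}

/-- The total weight of (the edges of) a graph `T` with respect to `w`. -/
noncomputable def treeWeight {V : Type*} [Fintype V] (T : SimpleGraph V)
    (w : Sym2 V → ℝ) : ℝ :=
  ∑ e ∈ (Set.toFinite T.edgeSet).toFinset, w e

/-- `T` is a maximum spanning tree of `K` with respect to `w`. -/
def IsMaxSpanningTree {V : Type*} [Fintype V] (K : SimpleGraph V)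
    (w : Sym2 V → ℝ) (T : SimpleGraph V) : Prop :=
  T ≤ K ∧ T.IsTree ∧
    ∀ T' : SimpleGraph V, T' ≤ K → T'.IsTree → treeWeight T' w ≤ treeWeight T w

private lemma cross_exists {V : Type*} {K H : SimpleGraph V} {u : V} {x v : V} (q : K.Walk x v)
    (h1 : H.Reachable u x) (h2 : ¬ H.Reachable u v) :
    ∃ a b, K.Adj a b ∧ s(a,b) ∈ q.edges ∧ H.Reachable u a ∧ ¬ H.Reachable u b := by
  induction q with
  | nil => exact absurd h1 h2
  | @cons c d e h q ih =>
    by_cases hd : H.Reachable u d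
    · obtain ⟨a, b, hab, hm, hra, hrb⟩ := ih hd h2
      exact ⟨a, b, hab, by simp [hm], hra, hrb⟩
    · exact ⟨c, d, h, by simp, h1, hd⟩


private lemma aux_reach {V : Type*} {T : SimpleGraph V} {u v : V} (he : T.Adj u v)
    {x y : V} (p : T.Walk x y)
    (hy : (T \ fromEdgeSet {s(u,v)}).Reachable y u ∨ (T \ fromEdgeSet {s(u,v)}).Reachable y v) :
    (T \ fromEdgeSet {s(u,v)}).Reachable x u ∨ (T \ fromEdgeSet {s(u,v)}).Reachable x v := by
  induction p with
  | nil => exact hy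
  | @cons c d _ h p ih =>
    by_cases hcd : s(c, d) = s(u, v)
    · rw [Sym2.eq_iff] at hcd
      rcases hcd with ⟨rfl, rfl⟩ | ⟨rfl, rfl⟩
      · exact Or.inl (Reachable.refl _)
      · exact Or.inr (Reachable.refl _)
    · have hadj : (T \ fromEdgeSet {s(u,v)}).Adj c d := by
        rw [sdiff_adj, fromEdgeSet_adj]
        exact ⟨h, fun hh => hcd hh.1⟩
      rcases ih hy with h1 | h1
      · exact Or.inl (hadj.reachable.trans h1)
      · exact Or.inr (hadj.reachable.trans h1)

private lemma key_exchange {V : Type*} [Fintype V] {K : SimpleGraph V} {w : Sym2 V → ℝ}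
    {T : SimpleGraph V} (hT : IsMaxSpanningTree K w T) {u v : V} (he : T.Adj u v)
    (q : K.Walk u v) :
    ∃ f ∈ q.edges, f ∈ K.edgeSet ∧ w f ≤ w s(u,v) := by
  classical
  set e : Sym2 V := s(u,v) with he'
  set H : SimpleGraph V := T \ fromEdgeSet {e} with hH
  -- e is a bridge of T
  have hbridge : ¬ H.Reachable u v := by
    have := (isAcyclic_iff_forall_adj_isBridge.mp hT.2.1.IsAcyclic) he
    rw [isBridge_iff] at this
    exact this
  obtain ⟨a, b, hab, hm, hra, hrb⟩ := cross_exists q (Reachable.refl u) hbridge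
  by_cases hfe : s(a, b) = e
  · exact ⟨s(a,b), hm, K.mem_edgeSet.mpr hab, le_of_eq (by rw [hfe])⟩
  set f : Sym2 V := s(a, b) with hf'
  have hfK : f ∈ K.edgeSet := K.mem_edgeSet.mpr hab
  have hanb : a ≠ b := hab.ne
  -- f not an edge of T
  have hfT : f ∉ T.edgeSet := by
    intro hfT
    have : H.Adj a b := by
      rw [hH, sdiff_adj, fromEdgeSet_adj]
      exact ⟨hfT, fun hh => hfe hh.1⟩
    exact hrb (hra.trans this.reachable)
  have hsides : ∀ x : V, H.Reachable x u ∨ H.Reachable x v := by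
    intro x
    obtain ⟨p⟩ := hT.2.1.isConnected x u
    exact aux_reach he p (Or.inl (Reachable.refl u))
  -- the exchanged graph
  set T'' : SimpleGraph V := H ⊔ fromEdgeSet {f} with hT''
  have hHle : H ≤ T := sdiff_le
  have hHle'' : H ≤ T'' := le_sup_left
  have hT''le : T'' ≤ K := by
    refine sup_le (hHle.trans hT.1) ?_
    intro c d hcd
    rw [fromEdgeSet_adj, Set.mem_singleton_iff, hf', Sym2.eq_iff] at hcd
    rcases hcd.1 with ⟨rfl, rfl⟩ | ⟨rfl, rfl⟩
    · exact hab
    · exact hab.symm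
  have hT''ab : T''.Adj a b := by
    refine Or.inr ?_
    rw [fromEdgeSet_adj]
    exact ⟨rfl, hanb⟩
  have hT''edges : T''.edgeSet = (T.edgeSet \ {e}) ∪ {f} := by
    rw [hT'', edgeSet_sup, hH, edgeSet_sdiff, edgeSet_fromEdgeSet, edgeSet_sdiff_sdiff_isDiag,
      edgeSet_fromEdgeSet]
    congr 1
    ext g
    simp only [Set.mem_diff, Set.mem_singleton_iff, Set.mem_setOf_eq, and_iff_left_iff_imp]
    rintro rfl
    exact Sym2.mk_isDiag_iff.not.mpr hanb
  -- T'' is connected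
  have hrbv : H.Reachable b v := by
    rcases hsides b with h1 | h1
    · exact absurd h1.symm hrb
    · exact h1
  have huv'' : T''.Reachable u v :=
    ((hra.mono hHle'').trans hT''ab.reachable).trans (hrbv.mono hHle'')
  have hconn : T''.Connected := by
    have hne : Nonempty V := ⟨u⟩
    rw [connected_iff]
    refine ⟨fun x y => ?_, hne⟩
    have hx := hsides x
    have hy := hsides y
    have hxu : T''.Reachable x u := by
      rcases hx with h1 | h1
      · exact h1.mono hHle''
      · exact (h1.mono hHle'').trans huv''.symm
    have hyu : T''.Reachable y u := by
      rcases hy with h1 | h1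
      · exact h1.mono hHle''
      · exact (h1.mono hHle'').trans huv''.symm
    exact hxu.trans hyu.symm
  -- T'' is acyclic
  have hacyc : T''.IsAcyclic := by
    intro x c hc
    by_cases hfc : f ∈ c.edges
    · have : T''.Adj a b ∧ (T'' \ fromEdgeSet {s(a,b)}).Reachable a b :=
        adj_and_reachable_delete_edges_iff_exists_cycle.mpr ⟨x, c, hc, hfc⟩
      have hle : (T'' \ fromEdgeSet {f}) ≤ H := by
        intro c' d' hcd'
        rw [sdiff_adj] at hcd'
        rcases hcd'.1 with h1 | h1
        · exact h1
        · exact absurd h1 hcd'.2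
      exact hrb (hra.trans (this.2.mono hle))
    · have hsub : ∀ g ∈ c.edges, g ∈ T.edgeSet := by
        intro g hg
        have := c.edges_subset_edgeSet hg
        rw [hT''edges] at this
        rcases this with ⟨h1, _⟩ | h1
        · exact h1
        · exact absurd (h1 ▸ hg) hfc
      exact hT.2.1.IsAcyclic (c.transfer T hsub) (hc.transfer hsub)
  -- weight comparison
  have hle := hT.2.2 T'' hT''le ⟨hconn, hacyc⟩
  have heT : e ∈ T.edgeSet := he
  have hsum : treeWeight T'' w = w f + (treeWeight T w - w e) := by
    have hset : (Set.toFinite T''.edgeSet).toFinset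
        = insert f (((Set.toFinite T.edgeSet).toFinset).erase e) := by
      ext g
      simp only [Set.Finite.mem_toFinset, hT''edges, Set.mem_union, Set.mem_diff,
        Set.mem_singleton_iff, Finset.mem_insert, Finset.mem_erase, Set.Finite.mem_toFinset]
      tauto
    rw [treeWeight, hset, Finset.sum_insert (by
      simp only [Finset.mem_erase, Set.Finite.mem_toFinset]
      exact fun h => hfT h.2), Finset.sum_erase_eq_sub (by
      simp only [Set.Finite.mem_toFinset]; exact heT)]
    rfl
  rw [hsum] at hle
  exact ⟨f, hm, hfK, by linarith⟩


/-- Let `K` be a finite connected weighted graph with positive injective edge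
weights `w`, let `T` be its maximum spanning tree, and let `U` be the union,
over all vertices `s`, of the shortest-path trees rooted at `s` computed with
the distances `d(i,j) = 1 / w(i,j)`.  Then `T ⊆ U ⊆ K` as edge sets. -/
theorem mst_subset_shortestPathUnion_subset {V : Type*} [Fintype V]
    (K : SimpleGraph V) (hK : K.Connected) (w : Sym2 V → ℝ)
    (hpos : ∀ e ∈ K.edgeSet, 0 < w e) (hinj : Set.InjOn w K.edgeSet)
    (T : SimpleGraph V) (hT : IsMaxSpanningTree K w T) :
    T.edgeSet ⊆ shortestPathUnion K (fun x => 1 / w x) ∧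
      shortestPathUnion K (fun x => 1 / w x) ⊆ K.edgeSet := by
  constructor
  · intro e he
    induction e with
    | _ u v =>
      have hTuv : T.Adj u v := he
      have hKuv : K.Adj u v := hT.1 hTuv
      have heK : s(u,v) ∈ K.edgeSet := hKuv
      refine ⟨u, v, Walk.cons hKuv Walk.nil, ⟨?_, ?_⟩, by simp⟩
      · simp [Walk.cons_isPath_iff, hKuv.ne]
      · intro q hq
        obtain ⟨f, hfq, hfK, hfle⟩ := key_exchange hT hTuv q
        have h1 : walkCost (fun x => 1 / w x) (Walk.cons hKuv Walk.nil) = 1 / w s(u,v) := by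
          simp [walkCost]
        have h2 : (1 : ℝ) / w s(u,v) ≤ 1 / w f :=
          one_div_le_one_div_of_le (hpos f hfK) hfle
        have h3 : (1 : ℝ) / w f ≤ walkCost (fun x => 1 / w x) q := by
          refine List.single_le_sum ?_ _ ?_
          · intro x hx
            simp only [List.mem_map] at hx
            obtain ⟨g, hg, rfl⟩ := hx
            have := q.edges_subset_edgeSet hg
            have hg0 := hpos _ this
            positivity
          · exact List.mem_map.mpr ⟨f, hfq, rfl⟩
        rw [h1]
        exact h2.trans h3
  · rintro x ⟨s, t, p, _, hx⟩
    exact p.edges_subset_edgeSet hx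
end

section
/- Cut optimality for maximum spanning trees: a spanning tree T of a connected weighted graph K with injective weights is the maximum spanning tree if and only if for every edge e ∈ E(K) \ E(T), the weight of e is strictly less than the weight of every edge on the unique path in T joining the endpoints of e. -/
open SimpleGraph

attribute [local instance] Classical.propDecidable

section Aux

variable {V : Type*}

private lemma edge_le_of_adj {K : SimpleGraph V} {a b : V} (h : K.Adj a b) :
    SimpleGraph.edge a b ≤ K := by
  intro x y hxy
  rw [edge_adj] at hxy
  rcases hxy with ⟨⟨rfl, rfl⟩ | ⟨rfl, rfl⟩, -⟩
  · exact h
  · exact h.symm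

/-- Splitting reachability across a deleted edge. -/
private lemma reach_del {G : SimpleGraph V} {u v : V} {x y : V} (p : G.Walk x y) :
    (G.deleteEdges {s(u, v)}).Reachable x y ∨
      (((G.deleteEdges {s(u, v)}).Reachable x u ∨ (G.deleteEdges {s(u, v)}).Reachable x v) ∧
       ((G.deleteEdges {s(u, v)}).Reachable y u ∨ (G.deleteEdges {s(u, v)}).Reachable y v)) := by
  induction p with
  | nil => exact Or.inl (Reachable.refl _)
  | @cons x z y h q ih =>
    by_cases he : s(x, z) = s(u, v)
    · rw [Sym2.eq_iff] at he
      right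
      constructor
      · rcases he with ⟨rfl, rfl⟩ | ⟨rfl, rfl⟩
        · exact Or.inl (Reachable.refl _)
        · exact Or.inr (Reachable.refl _)
      · rcases ih with hzy | ⟨-, hy⟩
        · rcases he with ⟨rfl, rfl⟩ | ⟨rfl, rfl⟩
          · exact Or.inr hzy.symm
          · exact Or.inl hzy.symm
        · exact hy
    · have hadj : (G.deleteEdges {s(u, v)}).Adj x z := by
        rw [deleteEdges_adj]
        exact ⟨h, by simpa using he⟩
      rcases ih with hzy | ⟨hz, hy⟩
      · exact Or.inl (hadj.reachable.trans hzy)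
      · exact Or.inr ⟨hz.imp hadj.reachable.trans hadj.reachable.trans, hy⟩

private lemma conn_del {G : SimpleGraph V} {a b : V} (h : G.Preconnected)
    (hab : (G.deleteEdges {s(a, b)}).Reachable a b) :
    (G.deleteEdges {s(a, b)}).Preconnected := by
  intro x y
  rcases reach_del (u := a) (v := b) (h x y).some with hxy | ⟨hx, hy⟩
  · exact hxy
  · have hx' : (G.deleteEdges {s(a, b)}).Reachable x a := hx.elim id fun h' => h'.trans hab.symm
    have hy' : (G.deleteEdges {s(a, b)}).Reachable y a := hy.elim id fun h' => h'.trans hab.symm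
    exact hx'.trans hy'.symm

variable [Fintype V]

/-- The edge finset of a graph, via `Set.toFinite`. -/
private noncomputable def eFin (G : SimpleGraph V) : Finset (Sym2 V) :=
  (Set.toFinite G.edgeSet).toFinset

private lemma mem_eFin {G : SimpleGraph V} {e : Sym2 V} : e ∈ eFin G ↔ e ∈ G.edgeSet :=
  Set.Finite.mem_toFinset _

private lemma treeWeight_eq (G : SimpleGraph V) (w : Sym2 V → ℝ) :
    treeWeight G w = ∑ e ∈ eFin G, w e := rfl

private lemma eFin_inj {G H : SimpleGraph V} (h : eFin G = eFin H) : G = H := by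
  rw [eFin, eFin, Set.Finite.toFinset_inj] at h
  exact edgeSet_inj.mp h

private lemma tree_card {G : SimpleGraph V} (hG : G.IsTree) :
    (eFin G).card + 1 = Fintype.card V := by
  classical
  have h : eFin G = G.edgeFinset := by
    ext e
    rw [eFin, Set.Finite.mem_toFinset, mem_edgeFinset]
  rw [h]
  exact hG.card_edgeFinset

private lemma exists_tree_le :
    ∀ (n : ℕ) (G : SimpleGraph V), (eFin G).card = n → G.Connected →
      ∃ T, T ≤ G ∧ T.IsTree := by
  intro n
  induction n using Nat.strong_induction_on with
  | _ n ih =>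
    intro G hn h
    by_cases hA : G.IsAcyclic
    · exact ⟨G, le_rfl, ⟨h, hA⟩⟩
    · rw [IsAcyclic] at hA
      push_neg at hA
      obtain ⟨v, c, hc⟩ := hA
      cases c with
      | nil => exact absurd rfl hc.ne_nil
      | @cons _ z _ hadj q =>
        have hmem : s(v, z) ∈ (Walk.cons hadj q).edges := by simp
        have hreach : (G \ fromEdgeSet {s(v, z)}).Reachable v z :=
          (adj_and_reachable_delete_edges_iff_exists_cycle.mpr ⟨v, _, hc, hmem⟩).2
        have hreach' : (G.deleteEdges {s(v, z)}).Reachable v z := hreach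
        haveI : Nonempty V := h.nonempty
        have hconn : (G.deleteEdges {s(v, z)}).Connected :=
          ⟨conn_del h.preconnected hreach'⟩
        have hvz : s(v, z) ∈ eFin G := mem_eFin.mpr hadj
        have h1 : eFin (G.deleteEdges {s(v, z)}) = (eFin G).erase s(v, z) := by
          ext e
          simp only [eFin, Set.Finite.mem_toFinset, edgeSet_deleteEdges, Set.mem_diff,
            Set.mem_singleton_iff, Finset.mem_erase, Set.Finite.mem_toFinset]
          tauto
        have hpos : 0 < (eFin G).card := Finset.card_pos.mpr ⟨_, hvz⟩
        have hcard : (eFin (G.deleteEdges {s(v, z)})).card < n := by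
          rw [h1, Finset.card_erase_of_mem hvz]
          omega
        obtain ⟨T, hle, hTt⟩ := ih _ hcard _ rfl hconn
        exact ⟨T, hle.trans (deleteEdges_le _), hTt⟩

private lemma isTree_of_card {G : SimpleGraph V} (h : G.Connected)
    (hcard : (eFin G).card + 1 = Fintype.card V) : G.IsTree := by
  obtain ⟨T, hle, hTt⟩ := exists_tree_le _ G rfl h
  have h1 := tree_card hTt
  have hsub : eFin T ⊆ eFin G := fun e he =>
    mem_eFin.mpr (edgeSet_mono hle (mem_eFin.mp he))
  have h2 : eFin T = eFin G := Finset.eq_of_subset_of_card_le hsub (by omega)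
  rw [← eFin_inj h2]
  exact hTt

private lemma eFin_exchange (G : SimpleGraph V) {a b : V} (hab : a ≠ b) (e : Sym2 V) :
    eFin ((G.deleteEdges {e}) ⊔ SimpleGraph.edge a b) = insert s(a, b) ((eFin G).erase e) := by
  ext x
  simp only [eFin, Set.Finite.mem_toFinset, edgeSet_sup, edgeSet_deleteEdges,
    edge_edgeSet_of_ne hab, Finset.mem_insert, Finset.mem_erase, Set.mem_union, Set.mem_diff,
    Set.mem_singleton_iff, Set.Finite.mem_toFinset]
  tauto

private lemma eFin_exchange' (G : SimpleGraph V) {a b : V} (hab : a ≠ b)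
    {f : Sym2 V} (hf : f ≠ s(a, b)) :
    eFin ((G ⊔ SimpleGraph.edge a b).deleteEdges {f}) = insert s(a, b) ((eFin G).erase f) := by
  ext x
  simp only [eFin, Set.Finite.mem_toFinset, edgeSet_deleteEdges, edgeSet_sup,
    edge_edgeSet_of_ne hab, Finset.mem_insert, Finset.mem_erase, Set.mem_union, Set.mem_diff,
    Set.mem_singleton_iff, Set.Finite.mem_toFinset]
  constructor
  · rintro ⟨h | rfl, hne⟩
    · exact Or.inr ⟨hne, h⟩
    · exact Or.inl rfl
  · rintro (rfl | ⟨hne, h⟩)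
    · exact ⟨Or.inr rfl, fun h' => hf h'.symm⟩
    · exact ⟨Or.inl h, hne⟩

private lemma sum_exchange {s : Finset (Sym2 V)} {w : Sym2 V → ℝ} {e f : Sym2 V}
    (he : e ∈ s) (hf : f ∉ s) :
    ∑ x ∈ insert f (s.erase e), w x = ∑ x ∈ s, w x - w e + w f := by
  rw [Finset.sum_insert (fun h => hf (Finset.mem_of_mem_erase h))]
  have := Finset.add_sum_erase s w he
  linarith

private lemma card_exchange {s : Finset (Sym2 V)} {e f : Sym2 V}
    (he : e ∈ s) (hf : f ∉ s) :
    (insert f (s.erase e)).card = s.card := by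
  rw [Finset.card_insert_of_notMem (fun h => hf (Finset.mem_of_mem_erase h)),
    Finset.card_erase_of_mem he]
  have : 0 < s.card := Finset.card_pos.mpr ⟨_, he⟩
  omega

end Aux

/-- Cut optimality for maximum spanning trees: a spanning tree `T` of a
connected weighted graph `K` with injective weights is the maximum spanning
tree if and only if for every edge `e = (u,v) ∈ E(K) \ E(T)`, the weight of
`e` is strictly less than the weight of every edge on the unique path in `T`
joining the endpoints of `e`. -/
theorem maxSpanningTree_iff_cut_optimal {V : Type*} [Fintype V]
    (K : SimpleGraph V) (hK : K.Connected) (w : Sym2 V → ℝ)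
    (hw : Set.InjOn w K.edgeSet)
    (T : SimpleGraph V) (hT : T ≤ K) (hTtree : T.IsTree) :
    IsMaxSpanningTree K w T ↔
      ∀ u v : V, K.Adj u v → ¬ T.Adj u v →
        ∀ p : T.Walk u v, p.IsPath → ∀ f ∈ p.edges, w s(u, v) < w f := by
  constructor
  · rintro ⟨-, -, hmax⟩ u v hKuv hnT p hp f hf
    revert hf
    induction f using Sym2.ind with
    | _ a b =>
    intro hf
    have hfT : s(a, b) ∈ T.edgeSet := p.edges_subset_edgeSet hf
    have hab : T.Adj a b := hfT
    have hfK : s(a, b) ∈ K.edgeSet := edgeSet_mono hT hfT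
    have heK : s(u, v) ∈ K.edgeSet := hKuv
    have hne : u ≠ v := hKuv.ne
    have hneT : s(u, v) ∉ T.edgeSet := hnT
    by_contra hcon
    push_neg at hcon
    have hfne : s(a, b) ≠ s(u, v) := fun h => hneT (h ▸ hfT)
    have hlt : w s(a, b) < w s(u, v) :=
      lt_of_le_of_ne hcon fun h => hfne (hw hfK heK h)
    set G := T ⊔ SimpleGraph.edge u v with hG
    have hGadj : G.Adj v u := Or.inr (by rw [edge_adj]; exact ⟨Or.inr ⟨rfl, rfl⟩, hne.symm⟩)
    have hcyc : (Walk.cons hGadj (p.mapLe le_sup_left)).IsCycle := by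
      rw [Walk.cons_isCycle_iff]
      refine ⟨hp.mapLe _, fun hmem => ?_⟩
      have : s(v, u) ∈ p.edges := by
        have := (Walk.edges_map (f := SimpleGraph.Hom.ofLE
          (le_sup_left : T ≤ G)) (p := p)) ▸ hmem
        simpa [Sym2.map_id'] using this
      rw [Sym2.eq_swap] at this
      exact hneT (p.edges_subset_edgeSet this)
    have hfc : s(a, b) ∈ (Walk.cons hGadj (p.mapLe le_sup_left)).edges := by
      rw [Walk.edges_cons]
      refine List.mem_cons_of_mem _ ?_
      have := (Walk.edges_map (f := SimpleGraph.Hom.ofLE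
        (le_sup_left : T ≤ G)) (p := p))
      rw [this]
      simpa [Sym2.map_id'] using hf
    have hreach : (G \ fromEdgeSet {s(a, b)}).Reachable a b :=
      (adj_and_reachable_delete_edges_iff_exists_cycle.mpr ⟨v, _, hcyc, hfc⟩).2
    have hreach' : (G.deleteEdges {s(a, b)}).Reachable a b := hreach
    set G' := G.deleteEdges {s(a, b)} with hG'
    haveI : Nonempty V := hK.nonempty
    have hG'conn : G'.Connected :=
      ⟨conn_del (fun x y => ((hTtree.isConnected x y).mono le_sup_left)) hreach'⟩
    have hEfin : eFin G' = insert s(u, v) ((eFin T).erase s(a, b)) :=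
      eFin_exchange' T hne hfne
    have hsmem : s(a, b) ∈ eFin T := mem_eFin.mpr hfT
    have hnmem : s(u, v) ∉ eFin T := fun h => hneT (mem_eFin.mp h)
    have hG'tree : G'.IsTree := by
      apply isTree_of_card hG'conn
      rw [hEfin, card_exchange hsmem hnmem]
      exact tree_card hTtree
    have hG'K : G' ≤ K :=
      (deleteEdges_le _).trans (sup_le hT (edge_le_of_adj hKuv))
    have hwt : treeWeight G' w = treeWeight T w - w s(a, b) + w s(u, v) := by
      rw [treeWeight_eq, treeWeight_eq, hEfin]
      exact sum_exchange hsmem hnmem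
    have := hmax G' hG'K hG'tree
    rw [hwt] at this
    linarith
  · intro hcut
    refine ⟨hT, hTtree, ?_⟩
    suffices H : ∀ (n : ℕ) (T' : SimpleGraph V), (eFin T' \ eFin T).card = n →
        T' ≤ K → T'.IsTree → treeWeight T' w ≤ treeWeight T w by
      intro T' h1 h2
      exact H _ T' rfl h1 h2
    intro n
    induction n using Nat.strong_induction_on with
    | _ n ih =>
    intro T' hn hT'K hT't
    by_cases h0 : eFin T' \ eFin T = ∅
    · have hsub : eFin T' ⊆ eFin T := by rwa [Finset.sdiff_eq_empty_iff_subset] at h0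
      have hc1 := tree_card hT't
      have hc2 := tree_card hTtree
      have h2 : eFin T' = eFin T := Finset.eq_of_subset_of_card_le hsub (by omega)
      rw [eFin_inj h2]
    · obtain ⟨e, he⟩ := Finset.nonempty_iff_ne_empty.mpr h0
      revert he
      induction e using Sym2.ind with
      | _ u v =>
      intro he
      rw [Finset.mem_sdiff] at he
      have heT' : s(u, v) ∈ T'.edgeSet := mem_eFin.mp he.1
      have heT : s(u, v) ∉ T.edgeSet := fun h => he.2 (mem_eFin.mpr h)
      have hadj : T'.Adj u v := heT'
      have hne : u ≠ v := hadj.ne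
      have hKuv : K.Adj u v := hT'K hadj
      have hnT : ¬ T.Adj u v := heT
      set D := T'.deleteEdges {s(u, v)} with hD
      have hvu : ¬ D.Reachable u v := by
        intro hr
        have hr' : (T' \ fromEdgeSet {s(u, v)}).Reachable u v := hr
        obtain ⟨x, c, hc, -⟩ :=
          adj_and_reachable_delete_edges_iff_exists_cycle.mp ⟨hadj, hr'⟩
        exact hT't.IsAcyclic c hc
      obtain ⟨p, hp, -⟩ := hTtree.existsUnique_path u v
      obtain ⟨d, hd, hdU, hdnU⟩ :=
        p.exists_boundary_dart {x | D.Reachable u x} (Reachable.refl u) hvu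
      have hdedge : d.edge = s(d.fst, d.snd) := rfl
      have hfmem : s(d.fst, d.snd) ∈ p.edges := hdedge ▸ List.mem_map_of_mem hd
      have hfT : s(d.fst, d.snd) ∈ T.edgeSet := p.edges_subset_edgeSet hfmem
      have hab : T.Adj d.fst d.snd := hfT
      have habne : d.fst ≠ d.snd := hab.ne
      have hfne : s(d.fst, d.snd) ≠ s(u, v) := fun h => heT (h ▸ hfT)
      have hfT' : s(d.fst, d.snd) ∉ T'.edgeSet := by
        intro hmem
        have hDadj : D.Adj d.fst d.snd := by
          rw [hD, deleteEdges_adj]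
          exact ⟨hmem, by simpa using hfne⟩
        exact hdnU (hdU.trans hDadj.reachable)
      have hwlt : w s(u, v) < w s(d.fst, d.snd) := hcut u v hKuv hnT p hp _ hfmem
      set T'' := D ⊔ SimpleGraph.edge d.fst d.snd with hT''
      have hedge : T''.Adj d.fst d.snd :=
        Or.inr (by rw [edge_adj]; exact ⟨Or.inl ⟨rfl, rfl⟩, habne⟩)
      have key : ∀ x, T''.Reachable x u := by
        intro x
        have hbside : ∀ z : V, ¬ D.Reachable u z → D.Reachable z v := by
          intro z hz
          rcases reach_del (u := u) (v := v) (hT't.isConnected z u).some with h' | ⟨h', -⟩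
          · exact absurd h'.symm hz
          · rcases h' with h' | h'
            · exact absurd h'.symm hz
            · exact h'
        rcases reach_del (u := u) (v := v) (hT't.isConnected x u).some with hxy | ⟨hx, -⟩
        · exact hxy.mono le_sup_left
        · rcases hx with h' | h'
          · exact h'.mono le_sup_left
          · have hbv : D.Reachable d.snd v := hbside _ hdnU
            exact (((h'.mono le_sup_left).trans
              ((hbv.mono (le_sup_left : D ≤ T'')).symm)).trans
              hedge.symm.reachable).trans ((hdU.mono le_sup_left).symm)
      haveI : Nonempty V := hK.nonempty
      have hT''conn : T''.Connected :=
        ⟨fun x y => (key x).trans (key y).symm⟩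
      have hEfin : eFin T'' = insert s(d.fst, d.snd) ((eFin T').erase s(u, v)) :=
        eFin_exchange T' habne _
      have heF : s(u, v) ∈ eFin T' := he.1
      have hfF : s(d.fst, d.snd) ∉ eFin T' := fun h => hfT' (mem_eFin.mp h)
      have hT''tree : T''.IsTree := by
        apply isTree_of_card hT''conn
        rw [hEfin, card_exchange heF hfF]
        exact tree_card hT't
      have hT''K : T'' ≤ K :=
        sup_le ((deleteEdges_le _).trans hT'K) (edge_le_of_adj (hT hab))
      have hwt : treeWeight T'' w = treeWeight T' w - w s(u, v) + w s(d.fst, d.snd) := by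
        rw [treeWeight_eq, treeWeight_eq, hEfin]
        exact sum_exchange heF hfF
      have hfTmem : s(d.fst, d.snd) ∈ eFin T := mem_eFin.mpr hfT
      have hmeas : (eFin T'' \ eFin T).card < n := by
        have hset : eFin T'' \ eFin T = (eFin T' \ eFin T).erase s(u, v) := by
          rw [hEfin]
          ext x
          simp only [Finset.mem_sdiff, Finset.mem_insert, Finset.mem_erase]
          constructor
          · rintro ⟨rfl | ⟨h1, h2⟩, h3⟩
            · exact absurd hfTmem h3
            · exact ⟨h1, h2, h3⟩
          · rintro ⟨h1, h2, h3⟩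
            exact ⟨Or.inr ⟨h1, h2⟩, h3⟩
        have hemem : s(u, v) ∈ eFin T' \ eFin T := Finset.mem_sdiff.mpr he
        have hpos : 0 < n := hn ▸ Finset.card_pos.mpr ⟨_, hemem⟩
        rw [hset, Finset.card_erase_of_mem hemem, hn]
        omega
      have := ih _ hmeas T'' rfl hT''K hT''tree
      rw [hwt] at this
      linarith
end
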